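/- If all parameters κ_1 < ⋯ < κ_n are integers, then for any point A of a positroid cell and any fixed time t₀, the contour plot C_{t₀}(u_A) — the locus where the piecewise-linear function f_A(x,y,t₀) = max_{J∈M} [ log(Δ_J(A) K_J) + Σ_{i∈J}(κ_i x + κ_i² y + κ_i³ t₀) ] fails to be locally linear — is a tropical curve in ℝ², i.e., the corner locus of a tropical polynomial (a finite maximum of affine-linear functions with integer slopes). -/

import Mathlib

/-- The nonlinearity locus of `f : ℝ² → ℝ`: points near which `f` is not affine. -/
def NonlinLocus (f : ℝ × ℝ → ℝ) : Set (ℝ × ℝ) :=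
  {p | ¬ ∃ a b c : ℝ, ∀ᶠ q in nhds p, f q = a * q.1 + b * q.2 + c}

/-- A tropical curve in `ℝ²`: the corner (nonlinearity) locus of a finite maximum of
affine-linear functions with integer slopes. -/
def IsTropicalCurve (C : Set (ℝ × ℝ)) : Prop :=
  ∃ (F : Finset (ℤ × ℤ × ℝ)) (hF : F.Nonempty),
    C = NonlinLocus (fun p =>
      F.sup' hF (fun v => (v.1 : ℝ) * p.1 + (v.2.1 : ℝ) * p.2 + v.2.2))

/-- If the parameters `κ_1 < ⋯ < κ_n` are integers, then for any point `A` of a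
positroid cell (with positive minors indexed by `M`, giving positive constants
`Δ_J(A)K_J = c J`) and any fixed time `t₀`, the contour plot — the locus where
`f_A(x,y,t₀) = max_{J∈M}[log(c J) + Σ_{i∈J}(κ_i x + κ_i² y + κ_i³ t₀)]` fails to be
locally linear — is a tropical curve in `ℝ²`. -/
theorem contour_plot_is_tropical_curve (n k : ℕ) (κ : Fin n → ℤ) (hκ : StrictMono κ)
    (M : Finset (Finset (Fin n))) (hM : M.Nonempty) (hMk : ∀ S ∈ M, S.card = k)
    (c : Finset (Fin n) → ℝ) (hc : ∀ S ∈ M, 0 < c S) (t₀ : ℝ) :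
    IsTropicalCurve (NonlinLocus (fun p =>
      M.sup' hM (fun J => Real.log (c J) +
        ∑ i ∈ J, ((κ i : ℝ) * p.1 + (κ i : ℝ) ^ 2 * p.2 + (κ i : ℝ) ^ 3 * t₀)))) := by
  classical
  refine ⟨M.image (fun J => (∑ i ∈ J, κ i, ∑ i ∈ J, (κ i) ^ 2,
      Real.log (c J) + ∑ i ∈ J, (κ i : ℝ) ^ 3 * t₀)), hM.image _, ?_⟩
  refine congrArg NonlinLocus (funext fun p => ?_)
  rw [Finset.sup'_image]
  refine Finset.sup'_congr hM rfl (fun J _ => ?_)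
  simp only [Function.comp_apply]
  push_cast
  rw [Finset.sum_add_distrib, Finset.sum_add_distrib, Finset.sum_mul, Finset.sum_mul]
  ring
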